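/- Let G be a finitely generated group with generating set A and word metric length |g|_A, and define the growth function g_G(n) = |{ g ∈ G : |g|_A ≤ n }|. For the word problem language W(G) ⊆ (A ∪ A⁻¹)*, the maximum size U_{W(G)}(n) of a set of uniformly n-dissimilar strings satisfies U_{W(G)}(n) ≥ g_G(⌊n/2⌋). -/

import Mathlib

/-- Growth lower bound for uniform dissimilarity in the word problem language.
Let `G` be a group, `X` an alphabet equipped with an evaluation `eval : X → G`
whose image is closed under inverses (`X` plays the role of `A ∪ A⁻¹`).
For any finite set `T` of group elements, each representable by a word of length
at most `⌊n/2⌋`, there is a set `S` of strings of the same cardinality which is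
uniformly `n`-dissimilar for the word problem language
`W(G) = { u | (u.map eval).prod = 1 }`.  Hence `U_{W(G)}(n) ≥ g_G(⌊n/2⌋)`. -/
theorem word_problem_uniform_dissimilarity {G : Type*} [Group G] {X : Type*}
    (eval : X → G) (hinv : ∀ x : X, ∃ x' : X, eval x' = (eval x)⁻¹)
    (n : ℕ) (T : Finset G)
    (hT : ∀ g ∈ T, ∃ u : List X, u.length ≤ n / 2 ∧ (u.map eval).prod = g) :
    ∃ S : Finset (List X), S.card = T.card ∧
      ∀ w ∈ S, ∃ v : List X,
        (w ++ v).length ≤ n ∧ (((w ++ v).map eval).prod = 1) ∧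
        ∀ w' ∈ S, w' ≠ w →
          (w' ++ v).length ≤ n ∧ ((w' ++ v).map eval).prod ≠ 1 := by
  classical
  choose u hlen hprod using hT
  set inv : X → X := fun x => (hinv x).choose with hinvdef
  have hinv' : ∀ x, eval (inv x) = (eval x)⁻¹ := fun x => (hinv x).choose_spec
  have key : ∀ w : List X, (List.map (eval ∘ inv) w).reverse.prod = ((w.map eval).prod)⁻¹ := by
    intro w
    induction w with
    | nil => simp
    | cons a t ih => simp [ih, hinv', mul_inv_rev, List.prod_append]
  set f : {g // g ∈ T} → List X := fun g => u g.1 g.2 with hf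
  have hfinj : Function.Injective f := by
    intro a b h
    have : (((f a).map eval)).prod = (((f b).map eval)).prod := by rw [h]
    rw [hf] at this
    simp only [hprod] at this
    exact Subtype.ext this
  refine ⟨T.attach.image f, ?_, ?_⟩
  · rw [Finset.card_image_of_injective _ hfinj, Finset.card_attach]
  · intro w hw
    rcases Finset.mem_image.mp hw with ⟨g, _, rfl⟩
    refine ⟨((f g).map inv).reverse, ?_, ?_, ?_⟩
    · have h1 : (f g).length ≤ n / 2 := hlen g.1 g.2
      simp only [List.length_append, List.length_reverse, List.length_map]
      have := Nat.div_add_mod n 2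
      omega
    · simp only [List.map_append, List.prod_append, List.map_reverse, List.map_map, key, hprod]
      simp
    · intro w' hw' hne
      rcases Finset.mem_image.mp hw' with ⟨g', _, rfl⟩
      have h1 : (f g').length ≤ n / 2 := hlen g'.1 g'.2
      have h2 : (f g).length ≤ n / 2 := hlen g.1 g.2
      constructor
      · simp only [List.length_append, List.length_reverse, List.length_map]
        omega
      · simp only [List.map_append, List.prod_append, List.map_reverse, List.map_map, key, hprod]
        intro hcontra
        have : (g' : G) = g := by
          have := mul_inv_eq_one.mp hcontra
          exact (hprod g'.1 g'.2).symm.trans (this.trans (hprod g.1 g.2))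
        exact hne (congrArg f (Subtype.ext this))
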